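/- Let g : ℝ → ℝ be a monotone increasing continuous map with g(x+1) = g(x) + d for some integer d ≥ 2 (a lift of a degree-d covering of the circle). Then there exists a monotone, continuous, surjective map h : ℝ → ℝ with h(x+1) = h(x) + 1 such that h ∘ g = m_d ∘ h, where m_d(x) = d·x. -/

import Mathlib

open Filter Topology

/-- Shub's semi-conjugacy: a monotone continuous lift `g` of a degree-`d`
circle covering (`g(x+1) = g(x) + d`, `d ≥ 2`) is semi-conjugate to the
linear expanding map `x ↦ d·x` by a monotone continuous surjective map `h`
with `h(x+1) = h(x) + 1`. -/
theorem semiconjugacy_to_linear_expanding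
    (g : ℝ → ℝ) (hg_mono : Monotone g) (hg_cont : Continuous g)
    (d : ℤ) (hd : 2 ≤ d) (hg_lift : ∀ x, g (x + 1) = g x + d) :
    ∃ h : ℝ → ℝ, Monotone h ∧ Continuous h ∧ Function.Surjective h ∧
      (∀ x, h (x + 1) = h x + 1) ∧
      ∀ x, h (g x) = d * h x := by
  have hd2 : (2:ℝ) ≤ (d:ℝ) := by exact_mod_cast hd
  have hdpos : (0:ℝ) < (d:ℝ) := by linarith
  -- integer translation of g
  have gadd : ∀ (m : ℤ) (x : ℝ), g (x + m) = g x + d * m := by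
    intro m
    induction m using Int.induction_on with
    | zero => intro x; simp
    | succ k ih =>
      intro x
      push_cast
      have h1 := hg_lift (x + k)
      have h2 := ih x
      push_cast at h1 h2
      rw [← add_assoc, h1, h2]; ring
    | pred k ih =>
      intro x
      have h1 := hg_lift (x - ((k:ℝ) + 1))
      have h2 := ih x
      push_cast at h1 h2 ⊢
      have e : x - ((k:ℝ) + 1) + 1 = x + -(k:ℝ) := by ring
      rw [e] at h1
      have e2 : x + (-(k:ℝ) - 1) = x - ((k:ℝ) + 1) := by ring
      rw [e2]
      linarith
  -- bound on the displacement
  obtain ⟨M, hM⟩ : ∃ M, ∀ x : ℝ, |g x - d * x| ≤ M := by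
    have hcpsi : Continuous fun x : ℝ => g x - (d:ℝ) * x := by fun_prop
    obtain ⟨C, hC⟩ := (isCompact_Icc (a := (0:ℝ)) (b := 1)).exists_bound_of_continuousOn
      hcpsi.continuousOn
    refine ⟨C, fun x => ?_⟩
    have hx : Int.fract x ∈ Set.Icc (0:ℝ) 1 :=
      ⟨Int.fract_nonneg x, (Int.fract_lt_one x).le⟩
    have hb := hC _ hx
    have hper : g (Int.fract x) - d * Int.fract x = g x - d * x := by
      have e : Int.fract x = x + (-⌊x⌋ : ℤ) := by
        rw [Int.fract]; push_cast; ring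
      rw [e, gadd]; push_cast; ring
    rw [Real.norm_eq_abs, hper] at hb
    exact hb
  set F : ℕ → ℝ → ℝ := fun n x => g^[n] x / (d:ℝ)^n with hF
  have hdpow : ∀ n : ℕ, (0:ℝ) < (d:ℝ)^n := fun n => pow_pos hdpos n
  set r : ℝ := (d:ℝ)⁻¹ with hrdef
  have hr0 : 0 ≤ r := by positivity
  have hr1 : r < 1 := by
    rw [hrdef, inv_lt_one_iff₀]; right; linarith
  have hdist : ∀ x n, dist (F n x) (F (n+1) x) ≤ (M * r) * r ^ n := by
    intro x n
    rw [Real.dist_eq]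
    have e : F n x - F (n+1) x = -((g (g^[n] x) - d * g^[n] x) / (d:ℝ)^(n+1)) := by
      simp only [hF, Function.iterate_succ_apply']
      field_simp
      ring
    rw [e, abs_neg, abs_div, abs_of_pos (hdpow (n+1)), div_le_iff₀ (hdpow (n+1))]
    calc |g (g^[n] x) - d * g^[n] x| ≤ M := hM _
      _ = M * r * r ^ n * (d:ℝ)^(n+1) := by
        have h1 : r * (d:ℝ) = 1 := inv_mul_cancel₀ (ne_of_gt hdpos)
        have h2 : r ^ n * (d:ℝ)^n = 1 := by rw [← mul_pow, h1, one_pow]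
        rw [show M * r * r ^ n * (d:ℝ)^(n+1) = M * ((r * (d:ℝ)) * (r ^ n * (d:ℝ)^n)) by ring,
          h1, h2]
        ring
  have hcauchy : ∀ x, CauchySeq (fun n => F n x) :=
    fun x => cauchySeq_of_le_geometric r (M * r) hr1 (hdist x)
  set H : ℝ → ℝ := fun x => limUnder atTop (fun n => F n x) with hHdef
  have hHlim : ∀ x, Tendsto (fun n => F n x) atTop (𝓝 (H x)) :=
    fun x => (hcauchy x).tendsto_limUnder
  -- continuity via uniform convergence
  have hFcont : ∀ n, Continuous (F n) := fun n => (hg_cont.iterate n).div_const _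
  have hunif : TendstoUniformly F H atTop := by
    rw [Metric.tendstoUniformly_iff]
    intro ε hε
    have hten : Tendsto (fun n : ℕ => (M * r) * r ^ n / (1 - r)) atTop (𝓝 0) := by
      have := ((tendsto_pow_atTop_nhds_zero_of_lt_one hr0 hr1).const_mul (M * r)).div_const (1 - r)
      simpa using this
    filter_upwards [hten.eventually (gt_mem_nhds hε)] with n hn x
    have hb := dist_le_of_le_geometric_of_tendsto r (M * r) hr1 (hdist x) (hHlim x) n
    calc dist (H x) (F n x) = dist (F n x) (H x) := dist_comm _ _
      _ ≤ (M * r) * r ^ n / (1 - r) := hb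
      _ < ε := hn
  have hHcont : Continuous H := hunif.continuous (Frequently.of_forall hFcont)
  -- monotone
  have hHmono : Monotone H := by
    intro x y hxy
    refine le_of_tendsto_of_tendsto' (hHlim x) (hHlim y) (fun n => ?_)
    have hxy' : g^[n] x ≤ g^[n] y := hg_mono.iterate n hxy
    simp only [hF]
    gcongr
  -- periodicity
  have hiter : ∀ (n : ℕ) (x : ℝ), g^[n] (x + 1) = g^[n] x + (d:ℝ)^n := by
    intro n
    induction n with
    | zero => intro x; simp
    | succ n ih =>
      intro x
      rw [Function.iterate_succ_apply', Function.iterate_succ_apply', ih]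
      have h1 := gadd (d^n) (g^[n] x)
      push_cast at h1
      rw [h1]; ring
  have hHper : ∀ x, H (x + 1) = H x + 1 := by
    intro x
    have e : ∀ n, F n (x + 1) = F n x + 1 := by
      intro n
      simp only [hF, hiter]
      field_simp
    have h1 : Tendsto (fun n => F n (x + 1)) atTop (𝓝 (H x + 1)) := by
      have := (hHlim x).add_const 1
      exact this.congr fun n => (e n).symm
    exact tendsto_nhds_unique (hHlim (x + 1)) h1
  -- semiconjugacy
  have hHconj : ∀ x, H (g x) = d * H x := by
    intro x
    have e : ∀ n, F n (g x) = d * F (n+1) x := by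
      intro n
      simp only [hF, ← Function.iterate_succ_apply, pow_succ]
      field_simp
    have h2 : Tendsto (fun n => F (n+1) x) atTop (𝓝 (H x)) :=
      (hHlim x).comp (tendsto_add_atTop_nat 1)
    have h1 : Tendsto (fun n => F n (g x)) atTop (𝓝 ((d:ℝ) * H x)) :=
      (h2.const_mul (d:ℝ)).congr fun n => (e n).symm
    exact tendsto_nhds_unique (hHlim (g x)) h1
  -- integer translation of H
  have hHint : ∀ (m : ℤ) (x : ℝ), H (x + m) = H x + m := by
    intro m
    induction m using Int.induction_on with
    | zero => intro x; simp
    | succ k ih =>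
      intro x
      push_cast
      have h2 := ih x
      push_cast at h2
      rw [← add_assoc, hHper, h2]; ring
    | pred k ih =>
      intro x
      have h1 := hHper (x - ((k:ℝ) + 1))
      have h2 := ih x
      push_cast at h2 ⊢
      have e : x - ((k:ℝ) + 1) + 1 = x + -(k:ℝ) := by ring
      rw [e] at h1
      have e2 : x + (-(k:ℝ) - 1) = x - ((k:ℝ) + 1) := by ring
      rw [e2]
      linarith
  -- surjectivity
  have hlow : ∀ x : ℝ, H 0 + (x - 1) ≤ H x := by
    intro x
    have h1 := hHint ⌊x⌋ 0
    rw [zero_add] at h1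
    have h2 : H ((⌊x⌋ : ℝ)) ≤ H x := hHmono (Int.floor_le x)
    have h3 : x - 1 < (⌊x⌋ : ℝ) := Int.sub_one_lt_floor x
    linarith
  have hhigh : ∀ x : ℝ, H x ≤ H 0 + (x + 1) := by
    intro x
    have h1 := hHint ⌈x⌉ 0
    rw [zero_add] at h1
    have h2 : H x ≤ H ((⌈x⌉ : ℝ)) := hHmono (Int.le_ceil x)
    have h3 : (⌈x⌉ : ℝ) < x + 1 := Int.ceil_lt_add_one x
    linarith
  have htop : Tendsto H atTop atTop := by
    refine tendsto_atTop_mono hlow ?_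
    exact tendsto_atTop_add_const_left _ _ (tendsto_atTop_add_const_right _ _ tendsto_id)
  have hbot : Tendsto H atBot atBot := by
    refine tendsto_atBot_mono hhigh ?_
    exact tendsto_atBot_add_const_left _ _ (tendsto_atBot_add_const_right _ _ tendsto_id)
  have hsurj : Function.Surjective H := Continuous.surjective hHcont htop hbot
  exact ⟨H, hHmono, hHcont, hsurj, hHper, hHconj⟩
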